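/- Fix integers n and m. Define u₁, u₂ : ℝ × ℝ × ℝ → ℝ by u₁(t,x,y) = 1 − m·sin(n(x−t)+my) and u₂(t,x,y) = n·sin(n(x−t)+my). Then at every point (t,x,y): (i) ∂_t u₁ + u₁·∂_x u₁ + u₂·∂_y u₁ = 0, (ii) ∂_t u₂ + u₁·∂_x u₂ + u₂·∂_y u₂ = 0, and (iii) ∂_x u₁ + ∂_y u₂ = 0. In other words, the vector field u = (u₁, u₂), which is 2π-periodic in x and y, is an exact smooth solution of the incompressible Euler equations ∂_t u + (u·∇)u = −∇p, div u = 0, with constant pressure p. -/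

import Mathlib

/-- First component of the Kelvin wave on the flat two-torus. -/
noncomputable def kelvinU1 (n m : ℤ) (t x y : ℝ) : ℝ :=
  1 - (m : ℝ) * Real.sin ((n : ℝ) * (x - t) + (m : ℝ) * y)

/-- Second component of the Kelvin wave on the flat two-torus. -/
noncomputable def kelvinU2 (n m : ℤ) (t x y : ℝ) : ℝ :=
  (n : ℝ) * Real.sin ((n : ℝ) * (x - t) + (m : ℝ) * y)

/-- The Kelvin wave `u = (u₁, u₂)` with
`u₁(t,x,y) = 1 - m sin(n(x-t)+my)` and `u₂(t,x,y) = n sin(n(x-t)+my)` is an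
exact solution of the incompressible Euler equations with constant pressure:
(i) `∂ₜu₁ + u₁ ∂ₓu₁ + u₂ ∂ᵧu₁ = 0`, (ii) `∂ₜu₂ + u₁ ∂ₓu₂ + u₂ ∂ᵧu₂ = 0`,
(iii) `∂ₓu₁ + ∂ᵧu₂ = 0` at every point `(t, x, y)`. -/
theorem statement7 (n m : ℤ) (t x y : ℝ) :
    (deriv (fun s => kelvinU1 n m s x y) t
        + kelvinU1 n m t x y * deriv (fun a => kelvinU1 n m t a y) x
        + kelvinU2 n m t x y * deriv (fun b => kelvinU1 n m t x b) y = 0) ∧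
    (deriv (fun s => kelvinU2 n m s x y) t
        + kelvinU1 n m t x y * deriv (fun a => kelvinU2 n m t a y) x
        + kelvinU2 n m t x y * deriv (fun b => kelvinU2 n m t x b) y = 0) ∧
    (deriv (fun a => kelvinU1 n m t a y) x + deriv (fun b => kelvinU2 n m t x b) y = 0) := by
  set θ : ℝ := (n : ℝ) * (x - t) + (m : ℝ) * y with hθ
  -- phase derivatives
  have pt : HasDerivAt (fun s : ℝ => (n : ℝ) * (x - s) + (m : ℝ) * y) (-(n : ℝ)) t := by
    simpa using (((hasDerivAt_id t).const_sub x).const_mul (n : ℝ)).add_const ((m : ℝ) * y)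
  have px : HasDerivAt (fun a : ℝ => (n : ℝ) * (a - t) + (m : ℝ) * y) ((n : ℝ)) x := by
    simpa using (((hasDerivAt_id x).sub_const t).const_mul (n : ℝ)).add_const ((m : ℝ) * y)
  have py : HasDerivAt (fun b : ℝ => (n : ℝ) * (x - t) + (m : ℝ) * b) ((m : ℝ)) y := by
    simpa using ((hasDerivAt_id y).const_mul (m : ℝ)).const_add ((n : ℝ) * (x - t))
  have st : HasDerivAt (fun s : ℝ => Real.sin ((n : ℝ) * (x - s) + (m : ℝ) * y))
      (Real.cos θ * (-(n : ℝ))) t := by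
      have := (Real.hasDerivAt_sin θ).comp t pt; exact this
  have sx : HasDerivAt (fun a : ℝ => Real.sin ((n : ℝ) * (a - t) + (m : ℝ) * y))
      (Real.cos θ * (n : ℝ)) x := by
      have := (Real.hasDerivAt_sin θ).comp x px; exact this
  have sy : HasDerivAt (fun b : ℝ => Real.sin ((n : ℝ) * (x - t) + (m : ℝ) * b))
      (Real.cos θ * (m : ℝ)) y := by
      have := (Real.hasDerivAt_sin θ).comp y py; exact this
  have h1t : deriv (fun s => kelvinU1 n m s x y) t = -((m : ℝ) * (Real.cos θ * (-(n : ℝ)))) := by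
    unfold kelvinU1; exact ((st.const_mul (m : ℝ)).const_sub 1).deriv
  have h1x : deriv (fun a => kelvinU1 n m t a y) x = -((m : ℝ) * (Real.cos θ * (n : ℝ))) := by
    unfold kelvinU1; exact ((sx.const_mul (m : ℝ)).const_sub 1).deriv
  have h1y : deriv (fun b => kelvinU1 n m t x b) y = -((m : ℝ) * (Real.cos θ * (m : ℝ))) := by
    unfold kelvinU1; exact ((sy.const_mul (m : ℝ)).const_sub 1).deriv
  have h2t : deriv (fun s => kelvinU2 n m s x y) t = (n : ℝ) * (Real.cos θ * (-(n : ℝ))) := by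
    unfold kelvinU2; exact (st.const_mul (n : ℝ)).deriv
  have h2x : deriv (fun a => kelvinU2 n m t a y) x = (n : ℝ) * (Real.cos θ * (n : ℝ)) := by
    unfold kelvinU2; exact (sx.const_mul (n : ℝ)).deriv
  have h2y : deriv (fun b => kelvinU2 n m t x b) y = (n : ℝ) * (Real.cos θ * (m : ℝ)) := by
    unfold kelvinU2; exact (sy.const_mul (n : ℝ)).deriv
  refine ⟨?_, ?_, ?_⟩ <;>
  · simp only [h1t, h1x, h1y, h2t, h2x, h2y]
    try simp only [kelvinU1, kelvinU2, ← hθ]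
    ring1
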